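/- Let N > 100 and let (x_1, …, x_N) be the unique strictly decreasing zero-mean solution of the MIW recursion. Then for every n with 1 ≤ n ≤ m − 1, √(n(n+1)/2) ≤ S_n ≤ (3n/2)·√(2(1 + log(m/n))). -/

import Mathlib

noncomputable section

/-- Partial sums `S_n = x_1 + ⋯ + x_n`. -/
def Ssum (x : ℕ → ℝ) (n : ℕ) : ℝ := ∑ i ∈ Finset.Icc 1 n, x i

/-- `x` is a solution of the MIW recursion
`x_{n+1} = x_n - 1/(x_1 + ⋯ + x_n)` for `1 ≤ n ≤ N - 1`. -/
def IsMIW (N : ℕ) (x : ℕ → ℝ) : Prop :=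
  ∀ n, 1 ≤ n → n ≤ N - 1 → Ssum x n ≠ 0 ∧ x (n + 1) = x n - 1 / Ssum x n

/-- `m = (N+1)/2` if `N` is odd and `m = N/2` if `N` is even; in natural number
division both equal `(N+1)/2`. -/
def mIdx (N : ℕ) : ℕ := (N + 1) / 2

namespace MIWaux

open Finset

lemma Ssum_succ (x : ℕ → ℝ) (n : ℕ) : Ssum x (n + 1) = Ssum x n + x (n + 1) := by
  unfold Ssum
  rw [Finset.sum_Icc_succ_top (by omega : 1 ≤ n + 1)]

lemma Ssum_zero (x : ℕ → ℝ) : Ssum x 0 = 0 := by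
  unfold Ssum; simp

lemma Ssum_one (x : ℕ → ℝ) : Ssum x 1 = x 1 := by
  unfold Ssum; simp

lemma Ssum_split (x : ℕ → ℝ) (a b : ℕ) (hab : a ≤ b) :
    Ssum x b = Ssum x a + ∑ i ∈ Finset.Icc (a + 1) b, x i := by
  induction b, hab using Nat.le_induction with
  | base => rw [Finset.Icc_eq_empty (by omega)]; simp
  | succ b hab ih =>
      rw [Ssum_succ, ih, Finset.sum_Icc_succ_top (by omega : a + 1 ≤ b + 1)]; ring

/-- Gauss sum. -/
lemma gauss (n : ℕ) : ∑ j ∈ Finset.Icc 1 n, ((n : ℝ) + 1 - (j : ℝ)) = n * (n + 1) / 2 := by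
  induction n with
  | zero => simp
  | succ n ih =>
      rw [Finset.sum_Icc_succ_top (by omega : 1 ≤ n + 1)]
      have h1 : ∑ j ∈ Finset.Icc 1 n, ((n + 1 : ℕ) + 1 - (j : ℝ)) =
          ∑ j ∈ Finset.Icc 1 n, (((n : ℝ) + 1 - (j : ℝ)) + 1) := by
        apply Finset.sum_congr rfl; intro j _; push_cast; ring
      rw [h1, Finset.sum_add_distrib, ih, Finset.sum_const, Nat.card_Icc]
      simp only [nsmul_eq_mul, Nat.add_sub_cancel]
      push_cast
      ring

/-- Harmonic sum bound. -/
lemma harmonic (a b : ℕ) (h1 : 1 ≤ a) (hab : a ≤ b) :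
    ∑ k ∈ Finset.Icc a b, (1 : ℝ) / k ≤ 1 / a + (Real.log b - Real.log a) := by
  induction b, hab using Nat.le_induction with
  | base => simp
  | succ b hab ih =>
      rw [Finset.sum_Icc_succ_top (by omega : a ≤ b + 1)]
      have hb : (0 : ℝ) < b := by
        have : 1 ≤ b := le_trans h1 hab
        exact_mod_cast this
      have hb1 : (0 : ℝ) < (b : ℝ) + 1 := by linarith
      have key : 1 / ((b : ℝ) + 1) ≤ Real.log ((b : ℝ) + 1) - Real.log b := by
        have hlog := Real.log_le_sub_one_of_pos (show (0:ℝ) < (b : ℝ) / ((b : ℝ) + 1) by positivity)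
        rw [Real.log_div (ne_of_gt hb) (ne_of_gt hb1)] at hlog
        have : (b : ℝ) / ((b : ℝ) + 1) - 1 = -(1 / ((b : ℝ) + 1)) := by field_simp; ring
        linarith
      push_cast
      push_cast at ih
      linarith

/-- Comparison lemma for the second-order recursion. -/
lemma cmp (N : ℕ) (u v : ℕ → ℝ) (hN : 2 ≤ N)
    (hu0 : u 0 = 0) (hv0 : v 0 = 0)
    (hru : ∀ k, k + 1 ≤ N - 1 → u (k + 2) + u k = 2 * u (k + 1) - 1 / u (k + 1))
    (hrv : ∀ k, k + 1 ≤ N - 1 → v (k + 2) + v k = 2 * v (k + 1) - 1 / v (k + 1))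
    (hup : ∀ k, 1 ≤ k → k ≤ N - 1 → 0 < u k)
    (hvp : ∀ k, 1 ≤ k → k ≤ N - 1 → 0 < v k)
    (h1 : u 1 ≤ v 1) :
    v 1 - u 1 ≤ v N - u N := by
  have key : ∀ k, k ≤ N - 1 →
      (v 1 - u 1 ≤ v (k + 1) - u (k + 1)) ∧ (v k - u k ≤ v (k + 1) - u (k + 1)) ∧
        0 ≤ v (k + 1) - u (k + 1) := by
    intro k
    induction k with
    | zero =>
        intro _
        refine ⟨le_refl _, ?_, by linarith⟩
        rw [hu0, hv0]; linarith
    | succ k ih =>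
        intro hk
        obtain ⟨ih1, ih2, ih3⟩ := ih (by omega)
        have hru' := hru k hk
        have hrv' := hrv k hk
        have hu1 := hup (k + 1) (by omega) hk
        have hv1 := hvp (k + 1) (by omega) hk
        have e1 : 1 / u (k + 1) - 1 / v (k + 1) =
            (v (k + 1) - u (k + 1)) / (u (k + 1) * v (k + 1)) := by
          field_simp
          try ring
        have hpos : 0 ≤ (v (k + 1) - u (k + 1)) / (u (k + 1) * v (k + 1)) :=
          div_nonneg ih3 (by positivity)
        have hd : v (k + 2) - u (k + 2) = 2 * (v (k + 1) - u (k + 1)) - (v k - u k)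
            + (v (k + 1) - u (k + 1)) / (u (k + 1) * v (k + 1)) := by
          linarith
        refine ⟨by linarith, by linarith, by linarith⟩
  have h := key (N - 1) (le_refl _)
  have hNe : N - 1 + 1 = N := by omega
  rw [hNe] at h
  linarith [h.1]

/-- Equality propagation for the second-order recursion. -/
lemma cmp_eq (N : ℕ) (u v : ℕ → ℝ) (hN : 2 ≤ N)
    (hu0 : u 0 = 0) (hv0 : v 0 = 0)
    (hru : ∀ k, k + 1 ≤ N - 1 → u (k + 2) + u k = 2 * u (k + 1) - 1 / u (k + 1))
    (hrv : ∀ k, k + 1 ≤ N - 1 → v (k + 2) + v k = 2 * v (k + 1) - 1 / v (k + 1))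
    (h1 : u 1 = v 1) :
    ∀ k, k ≤ N → u k = v k := by
  have key : ∀ k, k ≤ N - 1 → u k = v k ∧ u (k + 1) = v (k + 1) := by
    intro k
    induction k with
    | zero => intro _; exact ⟨hu0.trans hv0.symm, h1⟩
    | succ k ih =>
        intro hk
        obtain ⟨e1, e2⟩ := ih (by omega)
        have hru' := hru k hk
        have hrv' := hrv k hk
        refine ⟨e2, ?_⟩
        rw [e1, e2] at hru'
        linarith
  intro k hk
  rcases Nat.lt_or_ge k N with h | h
  · exact (key k (by omega)).1
  · have hthis := (key (N - 1) (le_refl _)).2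
    have hNe : N - 1 + 1 = N := by omega
    rw [hNe] at hthis
    have hkN : k = N := by omega
    rw [hkN]
    exact hthis

end MIWaux

open MIWaux Finset

section Main

variable {N : ℕ} {x : ℕ → ℝ}

lemma SN0 (hmean : ∑ i ∈ Finset.Icc 1 N, x i = 0) : Ssum x N = 0 := hmean

lemma monoX (hdec : ∀ n, 1 ≤ n → n < N → x (n + 1) < x n) :
    ∀ i j, 1 ≤ i → i ≤ j → j ≤ N → x j ≤ x i := by
  intro i j h1
  induction j with
  | zero => intro h2 _; omega
  | succ j ih =>
      intro h2 h3
      rcases Nat.eq_or_lt_of_le h2 with h | h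
      · rw [h]
      · have hij : i ≤ j := by omega
        have := hdec j (by omega) (by omega)
        have := ih hij (by omega)
        linarith

lemma nxn_le (n : ℕ) (hmono : ∀ i, 1 ≤ i → i ≤ n → x n ≤ x i) :
    (n : ℝ) * x n ≤ Ssum x n := by
  unfold Ssum
  have h := Finset.card_nsmul_le_sum (Finset.Icc 1 n) x (x n)
    (fun i hi => hmono i (Finset.mem_Icc.mp hi).1 (Finset.mem_Icc.mp hi).2)
  rwa [Nat.card_Icc, Nat.add_sub_cancel, nsmul_eq_mul] at h

lemma Spos (hN : 2 ≤ N) (hdec : ∀ n, 1 ≤ n → n < N → x (n + 1) < x n)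
    (hmean : ∑ i ∈ Finset.Icc 1 N, x i = 0) :
    ∀ n, 1 ≤ n → n < N → 0 < Ssum x n := by
  intro n h1 h2
  have hmono := monoX hdec
  have hs := Ssum_split x n N (by omega)
  rw [SN0 hmean] at hs
  have htail : ∑ i ∈ Finset.Icc (n + 1) N, x i ≤ ((N - n : ℕ) : ℝ) * x (n + 1) := by
    have h := Finset.sum_le_card_nsmul (Finset.Icc (n + 1) N) x (x (n + 1))
      (fun i hi => hmono (n + 1) i (by omega) (Finset.mem_Icc.mp hi).1 (Finset.mem_Icc.mp hi).2)
    rwa [Nat.card_Icc, show N + 1 - (n + 1) = N - n by omega, nsmul_eq_mul] at h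
  have hhead : (n : ℝ) * x n ≤ Ssum x n :=
    nxn_le n (fun i hi1 hi2 => hmono i n hi1 hi2 (by omega))
  have hstep : x (n + 1) < x n := hdec n h1 h2
  have hb : (0 : ℝ) < ((N - n : ℕ) : ℝ) := by
    have : 1 ≤ N - n := by omega
    exact_mod_cast Nat.lt_of_lt_of_le Nat.zero_lt_one this
  have ha : (0 : ℝ) < (n : ℝ) := by exact_mod_cast h1
  by_contra hS
  push_neg at hS
  have hxn : x n ≤ 0 := by nlinarith
  have hbxn : ((N - n : ℕ) : ℝ) * x (n + 1) < ((N - n : ℕ) : ℝ) * x n :=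
    mul_lt_mul_of_pos_left hstep hb
  have hbn : ((N - n : ℕ) : ℝ) * x n ≤ 0 := mul_nonpos_of_nonneg_of_nonpos hb.le hxn
  linarith

lemma recS (hN : 2 ≤ N) (hMIW : IsMIW N x) :
    ∀ k, k + 1 ≤ N - 1 → Ssum x (k + 2) + Ssum x k = 2 * Ssum x (k + 1) - 1 / Ssum x (k + 1) := by
  intro k hk
  have h := (hMIW (k + 1) (by omega) hk).2
  have e2 : Ssum x (k + 2) = Ssum x (k + 1) + x (k + 2) := Ssum_succ x (k + 1)
  have e1 : Ssum x (k + 1) = Ssum x k + x (k + 1) := Ssum_succ x k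
  rw [e2, h]
  linarith

lemma Ssymm (hN : 2 ≤ N) (hMIW : IsMIW N x) (hdec : ∀ n, 1 ≤ n → n < N → x (n + 1) < x n)
    (hmean : ∑ i ∈ Finset.Icc 1 N, x i = 0) :
    ∀ n, n ≤ N → Ssum x n = Ssum x (N - n) := by
  set T := fun n => Ssum x (N - n) with hT
  have hpos := Spos hN hdec hmean
  have hSpos : ∀ k, 1 ≤ k → k ≤ N - 1 → 0 < Ssum x k := fun k a b => hpos k a (by omega)
  have hT0 : T 0 = 0 := by simp only [hT, Nat.sub_zero]; exact SN0 hmean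
  have hTpos : ∀ k, 1 ≤ k → k ≤ N - 1 → 0 < T k := by
    intro k h1 h2
    exact hpos (N - k) (by omega) (by omega)
  have hrecS := recS hN hMIW
  have hTrec : ∀ k, k + 1 ≤ N - 1 → T (k + 2) + T k = 2 * T (k + 1) - 1 / T (k + 1) := by
    intro k hk
    have h := hrecS (N - k - 2) (by omega)
    have e1 : N - k - 2 + 2 = N - k := by omega
    have e2 : N - k - 2 + 1 = N - (k + 1) := by omega
    have e3 : N - k - 2 = N - (k + 2) := by omega
    rw [e1, e2, e3] at h
    simp only [hT]
    linarith
  have hS0 : Ssum x 0 = 0 := Ssum_zero x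
  have hSN : Ssum x N = 0 := SN0 hmean
  have hTN : T N = 0 := by simp only [hT, Nat.sub_self]; exact hS0
  have h11 : Ssum x 1 = T 1 := by
    rcases le_total (Ssum x 1) (T 1) with h | h
    · have := cmp N (Ssum x) T hN hS0 hT0 hrecS hTrec hSpos hTpos h
      rw [hSN, hTN] at this
      linarith
    · have := cmp N T (Ssum x) hN hT0 hS0 hTrec hrecS hTpos hSpos h
      rw [hSN, hTN] at this
      linarith
  exact cmp_eq N (Ssum x) T hN hS0 hT0 hrecS hTrec h11

end Main

set_option maxHeartbeats 1600000 in
/-- For the unique strictly decreasing zero-mean solution of the MIW recursion with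
`N > 100`, for `1 ≤ n ≤ m - 1` one has
`√(n(n+1)/2) ≤ S_n ≤ (3n/2)√(2(1 + log(m/n)))`. -/
theorem Sn_bounds (N : ℕ) (hN : 100 < N) (x : ℕ → ℝ)
    (hMIW : IsMIW N x) (hdec : ∀ n, 1 ≤ n → n < N → x (n + 1) < x n)
    (hmean : ∑ i ∈ Finset.Icc 1 N, x i = 0) :
    ∀ n, 1 ≤ n → n ≤ mIdx N - 1 →
      Real.sqrt ((n : ℝ) * ((n : ℝ) + 1) / 2) ≤ Ssum x n ∧
      Ssum x n ≤ 3 * (n : ℝ) / 2 * Real.sqrt (2 * (1 + Real.log ((mIdx N : ℝ) / (n : ℝ)))) := by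
  intro n hn1 hn2
  obtain ⟨m, hmdef⟩ : ∃ m, mIdx N = m := ⟨_, rfl⟩
  rw [hmdef] at hn2 ⊢
  have hm2 : 2 * m = N + 1 ∨ 2 * m = N := by
    unfold mIdx at hmdef; omega
  have hm50 : 50 ≤ m := by omega
  have hmN1 : m ≤ N - 1 := by omega
  have hN2 : 2 ≤ N := by omega
  have hmono := monoX hdec
  have hpos := Spos hN2 hdec hmean
  have hsymm := Ssymm hN2 hMIW hdec hmean
  -- x m facts
  have hxm_e : x m = Ssum x m - Ssum x (m - 1) := by
    have h := Ssum_succ x (m - 1)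
    rw [show m - 1 + 1 = m by omega] at h
    linarith
  have hSm_pos : 0 < Ssum x m := hpos m (by omega) (by omega)
  have hxm : 0 ≤ x m ∧ x m ≤ 1 / (2 * Ssum x m) := by
    rcases hm2 with hodd | heven
    · -- N = 2m - 1
      have h := hsymm m (by omega)
      rw [show N - m = m - 1 by omega] at h
      have hx0 : x m = 0 := by rw [hxm_e, h]; ring
      rw [hx0]
      exact ⟨le_refl 0, by positivity⟩
    · -- N = 2m
      have h := hsymm (m - 1) (by omega)
      rw [show N - (m - 1) = m + 1 by omega] at h
      have hrec := (hMIW m (by omega) (by omega)).2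
      have hsucc := Ssum_succ x m
      have hx1 : x (m + 1) = -x m := by linarith
      have hx2 : x m = 1 / (2 * Ssum x m) := by
        have h2 : 2 * x m = 1 / Ssum x m := by linarith
        rw [eq_div_iff (by positivity)] at h2 ⊢
        linarith
      rw [hx2]
      exact ⟨by positivity, le_refl _⟩
  obtain ⟨hxm0, hxmle⟩ := hxm
  have hxpos : ∀ k, 1 ≤ k → k ≤ m → 0 ≤ x k := fun k h1 h2 =>
    le_trans hxm0 (hmono k m h1 h2 (by omega))
  have hSmono : ∀ a b, a ≤ b → b ≤ m → Ssum x a ≤ Ssum x b := by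
    intro a b hab hbm
    induction b with
    | zero =>
        have : a = 0 := by omega
        rw [this]
    | succ b ih =>
        rcases Nat.eq_or_lt_of_le hab with h | h
        · rw [h]
        · have h1 := ih (by omega) (by omega)
          have hx := hxpos (b + 1) (by omega) hbm
          rw [Ssum_succ]; linarith
  -- the key lower bound on squares
  have hlow : ∀ k, 1 ≤ k → k ≤ m - 1 → (k : ℝ) * ((k : ℝ) + 1) / 2 ≤ (Ssum x k) ^ 2 := by
    intro k hk1 hk2
    have hSk : 0 < Ssum x k := hpos k hk1 (by omega)
    have key : ∀ d j, 1 ≤ j → j + d = k + 1 → x (k + 1) + (d : ℝ) / Ssum x k ≤ x j := by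
      intro d
      induction d with
      | zero =>
          intro j hj1 hj2
          have hj : j = k + 1 := by omega
          rw [hj]
          simp
      | succ d ih =>
          intro j hj1 hj2
          have hjn : j ≤ k := by omega
          have hrecj := (hMIW j hj1 (by omega)).2
          have hprev := ih (j + 1) (by omega) (by omega)
          have hSj : 0 < Ssum x j := hpos j hj1 (by omega)
          have hle : Ssum x j ≤ Ssum x k := hSmono j k hjn (by omega)
          have h1S : 1 / Ssum x k ≤ 1 / Ssum x j := one_div_le_one_div_of_le hSj hle
          have hxj : x j = x (j + 1) + 1 / Ssum x j := by rw [hrecj]; ring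
          have hdc : ((d + 1 : ℕ) : ℝ) / Ssum x k = (d : ℝ) / Ssum x k + 1 / Ssum x k := by
            push_cast; ring
          rw [hxj, hdc]
          linarith
    have hsum : ∀ j ∈ Finset.Icc 1 k, ((k : ℝ) + 1 - (j : ℝ)) / Ssum x k ≤ x j := by
      intro j hj
      obtain ⟨hj1, hj2⟩ := Finset.mem_Icc.mp hj
      have hk := key (k + 1 - j) j hj1 (by omega)
      have hc : ((k + 1 - j : ℕ) : ℝ) = (k : ℝ) + 1 - (j : ℝ) := by
        rw [Nat.cast_sub (by omega : j ≤ k + 1)]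
        push_cast; ring
      rw [hc] at hk
      have hx1 : 0 ≤ x (k + 1) := hxpos (k + 1) (by omega) (by omega)
      linarith
    have hS : ∑ j ∈ Finset.Icc 1 k, ((k : ℝ) + 1 - (j : ℝ)) / Ssum x k ≤ Ssum x k :=
      Finset.sum_le_sum hsum
    rw [← Finset.sum_div, gauss k, div_le_iff₀ hSk] at hS
    nlinarith [hS]
  -- identity
  have hiden : ∀ k, 1 ≤ k → k ≤ N - 1 →
      ∑ i ∈ Finset.Icc 1 k, (x i) ^ 2 = (k : ℝ) - 1 + Ssum x k * x k := by
    intro k hk1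
    induction k, hk1 using Nat.le_induction with
    | base =>
        intro _
        rw [Finset.Icc_self]
        simp [Ssum_one]
        ring
    | succ k hk ih =>
        intro hk2
        have ihh := ih (by omega)
        obtain ⟨hne, hrec⟩ := hMIW k hk (by omega)
        rw [Finset.sum_Icc_succ_top (by omega : 1 ≤ k + 1), ihh, Ssum_succ]
        have hmul : Ssum x k * x (k + 1) = Ssum x k * x k - 1 := by
          rw [hrec]; field_simp
        have hexp : (Ssum x k + x (k + 1)) * x (k + 1)
            = Ssum x k * x (k + 1) + x (k + 1) ^ 2 := by ring
        push_cast
        linarith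
  -- Cauchy-Schwarz
  have hCS : ∀ k, (Ssum x k) ^ 2 ≤ (k : ℝ) * ∑ i ∈ Finset.Icc 1 k, (x i) ^ 2 := by
    intro k
    have h := Finset.sum_mul_sq_le_sq_mul_sq (Finset.Icc 1 k) x (fun _ => (1 : ℝ))
    simp only [mul_one, one_pow] at h
    rw [Finset.sum_const, Nat.card_Icc, Nat.add_sub_cancel, nsmul_eq_mul, mul_one] at h
    have hss : Ssum x k = ∑ i ∈ Finset.Icc 1 k, x i := rfl
    rw [hss]
    linarith [h]
  -- the step inequality for x_k^2
  have hstep : ∀ k, 1 ≤ k → k ≤ m - 1 → x k ^ 2 ≤ x (k + 1) ^ 2 + 2 / (k : ℝ) := by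
    intro k h1 h2
    have hxk : 0 ≤ x k := hxpos k h1 (by omega)
    have hSk : 0 < Ssum x k := hpos k h1 (by omega)
    have hnx : (k : ℝ) * x k ≤ Ssum x k :=
      nxn_le k (fun i hi1 hi2 => hmono i k hi1 hi2 (by omega))
    have hrec := (hMIW k h1 (by omega)).2
    have hkpos : (0 : ℝ) < k := by exact_mod_cast h1
    have he : x k * (x k - x (k + 1)) ≤ 1 / k := by
      have h1S : x k - x (k + 1) = 1 / Ssum x k := by rw [hrec]; ring
      rw [h1S, mul_one_div, div_le_div_iff₀ hSk hkpos]
      nlinarith [hnx]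
    have h2k : 2 / (k : ℝ) = 2 * (1 / (k : ℝ)) := by ring
    nlinarith [sq_nonneg (x k - x (k + 1)), he, h2k]
  -- telescoping
  have htel : ∀ d k, 1 ≤ k → k + d = m →
      x k ^ 2 ≤ x m ^ 2 + 2 * ∑ i ∈ Finset.Icc k (m - 1), (1 : ℝ) / i := by
    intro d
    induction d with
    | zero =>
        intro k h1 h2
        have hk : k = m := by omega
        rw [hk, Finset.Icc_eq_empty (by omega : ¬ m ≤ m - 1)]
        simp
    | succ d ih =>
        intro k h1 h2
        have h3 := hstep k h1 (by omega)
        have h4 := ih (k + 1) (by omega) (by omega)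
        have hins : ∑ i ∈ Finset.Icc k (m - 1), (1 : ℝ) / i
            = 1 / (k : ℝ) + ∑ i ∈ Finset.Icc (k + 1) (m - 1), (1 : ℝ) / i := by
          rw [← Finset.Ioc_insert_left (by omega : k ≤ m - 1),
            Finset.sum_insert (by simp), Finset.Icc_add_one_left_eq_Ioc]
        rw [hins]
        have h2k : 2 / (k : ℝ) = 2 * (1 / (k : ℝ)) := by ring
        linarith
  -- now the bounds for our particular n
  have hnm : n ≤ m - 1 := hn2
  have hSn : 0 < Ssum x n := hpos n hn1 (by omega)
  have hnR : (1 : ℝ) ≤ (n : ℝ) := by exact_mod_cast hn1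
  have hmRpos : (0 : ℝ) < (m : ℝ) := by positivity
  have hnRpos : (0 : ℝ) < (n : ℝ) := by linarith
  have hmR1 : (2 : ℝ) ≤ (m : ℝ) := by exact_mod_cast (by omega : 2 ≤ m)
  have hm1R : (1 : ℝ) < (m : ℝ) := by linarith
  have hlogdiv : Real.log ((m : ℝ) / (n : ℝ)) = Real.log m - Real.log n :=
    Real.log_div (by positivity) (by positivity)
  set L := Real.log m - Real.log n with hL
  have hLpos : 0 ≤ L := by
    have hnmR : (n : ℝ) ≤ (m : ℝ) := by exact_mod_cast (by omega : n ≤ m)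
    have := Real.log_le_log hnRpos hnmR
    linarith
  -- bound on x n ^ 2
  have hcast : ((m - 1 : ℕ) : ℝ) = (m : ℝ) - 1 := by
    rw [Nat.cast_sub (by omega : 1 ≤ m), Nat.cast_one]
  have hA : x n ^ 2 ≤ 2 / (n : ℝ) + 2 * L := by
    have hH := harmonic n (m - 1) hn1 (by omega)
    rw [hcast] at hH
    have htel' := htel (m - n) n hn1 (by omega)
    have hxm2 : x m ^ 2 ≤ 1 / (2 * (m : ℝ) * ((m : ℝ) - 1)) := by
      have hlo := hlow (m - 1) (by omega) (by omega)
      rw [hcast] at hlo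
      have hSm1pos : 0 < Ssum x (m - 1) := hpos (m - 1) (by omega) (by omega)
      have hSmm : Ssum x (m - 1) ≤ Ssum x m := hSmono (m - 1) m (by omega) (le_refl m)
      have hSm2 : (m : ℝ) * ((m : ℝ) - 1) / 2 ≤ (Ssum x m) ^ 2 := by nlinarith
      have h4 : x m ^ 2 ≤ 1 / (4 * (Ssum x m) ^ 2) := by
        have hsq : x m ^ 2 ≤ (1 / (2 * Ssum x m)) ^ 2 := by
          apply pow_le_pow_left₀ hxm0 hxmle
        have heq : (1 / (2 * Ssum x m)) ^ 2 = 1 / (4 * (Ssum x m) ^ 2) := by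
          field_simp; ring
        rw [heq] at hsq
        exact hsq
      have hprod : (0 : ℝ) < 2 * (m : ℝ) * ((m : ℝ) - 1) := by
        have h1 : (0 : ℝ) < (m : ℝ) := by linarith
        have h2 : (0 : ℝ) < (m : ℝ) - 1 := by linarith
        positivity
      have h5 : 1 / (4 * (Ssum x m) ^ 2) ≤ 1 / (2 * (m : ℝ) * ((m : ℝ) - 1)) := by
        apply one_div_le_one_div_of_le hprod
        linarith
      linarith
    have hlogm1 : 1 / (m : ℝ) ≤ Real.log m - Real.log ((m : ℝ) - 1) := by
      have hpos1 : (0 : ℝ) < ((m : ℝ) - 1) / (m : ℝ) := div_pos (by linarith) hmRpos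
      have hlog := Real.log_le_sub_one_of_pos hpos1
      rw [Real.log_div (by linarith) (by positivity)] at hlog
      have : ((m : ℝ) - 1) / (m : ℝ) - 1 = -(1 / (m : ℝ)) := by field_simp; ring
      linarith
    have h2m : 1 / (2 * (m : ℝ) * ((m : ℝ) - 1)) ≤ 2 / (m : ℝ) := by
      rw [div_le_div_iff₀ (by nlinarith) hmRpos]
      nlinarith
    have h2m' : x m ^ 2 ≤ 2 * (Real.log m - Real.log ((m : ℝ) - 1)) := by
      have : 2 / (m : ℝ) ≤ 2 * (Real.log m - Real.log ((m : ℝ) - 1)) := by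
        have h6 : 2 / (m : ℝ) = 2 * (1 / (m : ℝ)) := by ring
        rw [h6]
        linarith
      linarith
    rw [hL]
    have h2n : 2 / (n : ℝ) = 2 * (1 / (n : ℝ)) := by ring
    linarith
  -- upper bound quadratic
  have hB : (Ssum x n) ^ 2 ≤ (n : ℝ) * ((n : ℝ) - 1) + (n : ℝ) * (Ssum x n * x n) := by
    have hcs := hCS n
    have hi := hiden n hn1 (by omega)
    rw [hi] at hcs
    nlinarith [hcs]
  have hxn0 : 0 ≤ x n := hxpos n hn1 (by omega)
  set v := Real.sqrt (2 * (1 + L)) with hv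
  have hv0 : 0 ≤ v := Real.sqrt_nonneg _
  have hv2 : v ^ 2 = 2 * (1 + L) := Real.sq_sqrt (by linarith)
  constructor
  · -- lower bound
    have h := hlow n hn1 hnm
    have := Real.sqrt_le_sqrt h
    rwa [Real.sqrt_sq hSn.le] at this
  · -- upper bound
    rw [hlogdiv]
    rcases Nat.eq_or_lt_of_le hn1 with hone | htwo
    · -- n = 1
      have hn1' : n = 1 := hone.symm
      subst hn1'
      rw [Ssum_one]
      have hx1v : x 1 ≤ v := by
        rw [hv]
        apply (Real.le_sqrt (hxpos 1 (le_refl 1) (by omega)) (by linarith)).mpr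
        have : 2 / ((1 : ℕ) : ℝ) = 2 := by norm_num
        nlinarith [hA]
      push_cast
      linarith
    · -- 2 ≤ n
      have hn2R : (2 : ℝ) ≤ (n : ℝ) := by exact_mod_cast htwo
      set u := Real.sqrt (1 + 2 * L) with hu
      have hu0 : 0 ≤ u := Real.sqrt_nonneg _
      have hu2 : u ^ 2 = 1 + 2 * L := Real.sq_sqrt (by linarith)
      have hxu : x n ≤ u := by
        rw [hu]
        apply (Real.le_sqrt hxn0 (by linarith)).mpr
        have h2n : 2 / (n : ℝ) ≤ 1 := by
          rw [div_le_one hnRpos]; linarith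
        linarith [hA]
      set c := Real.sqrt ((n : ℝ) * ((n : ℝ) - 1)) with hc
      have hc0 : 0 ≤ c := Real.sqrt_nonneg _
      have hc2 : c ^ 2 = (n : ℝ) * ((n : ℝ) - 1) := Real.sq_sqrt (by nlinarith)
      have hcn : c ≤ (n : ℝ) := by
        rw [hc]
        have h1 : (n : ℝ) * ((n : ℝ) - 1) ≤ (n : ℝ) ^ 2 := by nlinarith
        calc Real.sqrt ((n : ℝ) * ((n : ℝ) - 1)) ≤ Real.sqrt ((n : ℝ) ^ 2) :=
              Real.sqrt_le_sqrt h1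
          _ = (n : ℝ) := Real.sqrt_sq (by linarith)
      have hC : Ssum x n ≤ (n : ℝ) * x n + c := by
        by_contra hcon
        push_neg at hcon
        have h5 : ((n : ℝ) * x n + c) * Ssum x n < Ssum x n * Ssum x n :=
          mul_lt_mul_of_pos_right hcon hSn
        have h7 : c * Ssum x n < c ^ 2 := by nlinarith [hB]
        have h8 : c ≤ Ssum x n := by nlinarith [mul_nonneg (by linarith : (0:ℝ) ≤ (n:ℝ)) hxn0]
        nlinarith [mul_le_mul_of_nonneg_left h8 hc0]
      have hkey : u + 1 ≤ 3 / 2 * v := by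
        have h9 : (u + 1) ^ 2 ≤ (3 / 2 * v) ^ 2 := by
          nlinarith [sq_nonneg (u - 4 / 5), hu2, hv2]
        calc u + 1 = Real.sqrt ((u + 1) ^ 2) := (Real.sqrt_sq (by linarith)).symm
          _ ≤ Real.sqrt ((3 / 2 * v) ^ 2) := Real.sqrt_le_sqrt h9
          _ = 3 / 2 * v := Real.sqrt_sq (by linarith)
      calc Ssum x n ≤ (n : ℝ) * x n + c := hC
        _ ≤ (n : ℝ) * u + (n : ℝ) := by nlinarith [hxu, hcn]
        _ = (n : ℝ) * (u + 1) := by ring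
        _ ≤ (n : ℝ) * (3 / 2 * v) := by
            apply mul_le_mul_of_nonneg_left hkey (by linarith)
        _ = 3 * (n : ℝ) / 2 * v := by ring
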